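/- Fix reals α, β with 0 ≤ α < 1 and β > 2, suppose D(a) is bounded, and let L be an upper bound for D(a). Then for every K > L and every word w in the language 𝓛 of Σ with k₂(w) = K, one has k₁(w) = k₁((b_1,…,b_K)); that is, the only vertex of the Hofbauer-type graph with second coordinate K is the vertex reached by the word (b_1,…,b_K). -/
import Mathlib


noncomputable section

namespace IntermediateBeta

/-- The intermediate beta transformation `x ↦ βx + α mod 1`. -/
def F (α β : ℝ) (x : ℝ) : ℝ := Int.fract (β * x + α)

/-- The digit sequence of a point: `Om α β x n` is the index `i` with `F^[n] x ∈ J_i`.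
For `y ∈ [0,1)` we have `y ∈ J_i ↔ ⌊β y + α⌋ = i`. -/
def Om (α β : ℝ) (x : ℝ) : ℕ → ℕ := fun n => (⌊β * ((F α β)^[n] x) + α⌋).toNat

/-- `ℓ = ⌈α + β⌉ - 1`. -/
def ell (α β : ℝ) : ℕ := ⌈α + β⌉₊ - 1

/-- The subshift `Σ`: closure (in the product topology) of the set of digit sequences
of points of `[0,1)`. -/
def Sig (α β : ℝ) : Set (ℕ → ℕ) := closure (Om α β '' Set.Ico (0 : ℝ) 1)

/-- The shift map. -/
def shift (x : ℕ → ℕ) : ℕ → ℕ := fun n => x (n + 1)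

/-- Lexicographic order on one-sided sequences. -/
def lexLe (x y : ℕ → ℕ) : Prop := x = y ∨ ∃ k, (∀ i < k, x i = y i) ∧ x k < y k

/-- The language of a subset `S` of the full shift: the finite words occurring as
initial segments of elements of `S`. -/
def langOf (S : Set (ℕ → ℕ)) (w : List ℕ) : Prop :=
  ∃ x ∈ S, ∀ i : Fin w.length, x i = w.get i

/-- Membership in the language `𝓛` of the subshift `Σ`. -/
def inLang (α β : ℝ) (w : List ℕ) : Prop := langOf (Sig α β) w

/-- The tail segment of `w` of length `k` agrees with the initial segment of `s`
of length `k`. -/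
def tailAgrees (s : ℕ → ℕ) (w : List ℕ) (k : ℕ) : Prop :=
  k ≤ w.length ∧ ∀ i < k, w.getD (w.length - k + i) 0 = s i

/-- `kmax s w` is the length of the longest tail segment of `w` agreeing with an
initial segment of `s` (`k₁(w)` when `s = a`, `k₂(w)` when `s = b`). -/
def kmax (s : ℕ → ℕ) (w : List ℕ) : ℕ := sSup {k | tailAgrees s w k}

/-- `D a b` is the set of lengths `n` such that the initial segment of `b` of
length `n` occurs somewhere in `a`.  Thus `D a b` is the set `𝖣(a)` of the paper
and `D b a` is `𝖣(b)`. -/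
def D (a b : ℕ → ℕ) : Set ℕ := {n | ∃ j, ∀ i < n, b i = a (j + i)}

/-- Gluing of the words `w 0, v 0, w 1, v 1, …, v (n-1), w n`. -/
def glue {n : ℕ} (w : Fin (n + 1) → List ℕ) (v : Fin n → List ℕ) : List ℕ :=
  (List.ofFn fun i : Fin n => w i.castSucc ++ v i).flatten ++ w (Fin.last n)

/-- A collection `G` of words inside the language `lang` has specification: there
is `τ ∈ ℕ` such that any finite list of words of `G` can be glued, with gluing
words from `lang` of length `τ`, into a word of `lang`. -/
def HasSpec (lang G : List ℕ → Prop) : Prop :=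
  ∃ τ : ℕ, 1 ≤ τ ∧ ∀ n : ℕ, ∀ w : Fin (n + 1) → List ℕ, (∀ i, G (w i)) →
    ∃ v : Fin n → List ℕ, (∀ i, (v i).length = τ ∧ lang (v i)) ∧ lang (glue w v)

/-- The initial segment of a sequence, as a finite word. -/
def pre (s : ℕ → ℕ) (n : ℕ) : List ℕ := List.ofFn fun i : Fin n => s i

/-- Lexicographic order for finite words (of equal length). -/
def wordLe (u v : List ℕ) : Prop :=
  u = v ∨ ∃ k, (∀ i < k, u.getD i 0 = v.getD i 0) ∧ u.getD k 0 < v.getD k 0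

/-- Concatenation of a finite word with an infinite sequence. -/
def wcat (w : List ℕ) (x : ℕ → ℕ) : ℕ → ℕ := fun n =>
  if h : n < w.length then w.get ⟨n, h⟩ else x (n - w.length)


lemma pre_length (s : ℕ → ℕ) (n : ℕ) : (pre s n).length = n := by
  simp [pre]

lemma pre_getD (s : ℕ → ℕ) {n i : ℕ} (h : i < n) : (pre s n).getD i 0 = s i := by
  rw [List.getD_eq_getElem _ _ (by simpa [pre] using h)]
  simp [pre]

/-- **Unique vertex with large second coordinate.** For `0 ≤ α < 1` and `β > 2`,
with `L` an upper bound for `𝖣(a)`: for every `K > L` and every `w ∈ 𝓛` with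
`k₂(w) = K` one has `k₁(w) = k₁(b_1…b_K)`, i.e. the only vertex of the
Hofbauer-type graph with second coordinate `K` is the one reached by `b_1…b_K`. -/
theorem unique_vertex_with_large_second_coord (α β : ℝ) (hα0 : 0 ≤ α)
    (hα1 : α < 1) (hβ : 2 < β)
    (b : ℕ → ℕ) (hb : b ∈ Sig α β) (hbsup : ∀ y ∈ Sig α β, lexLe y b)
    (L : ℕ) (hL : ∀ n ∈ D (Om α β 0) b, n ≤ L)
    (K : ℕ) (hK : L < K) (w : List ℕ) (hw : inLang α β w)
    (hk2 : kmax b w = K) :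
    kmax (Om α β 0) w = kmax (Om α β 0) (pre b K) := by
  have hbdd : BddAbove {k | tailAgrees b w k} := ⟨w.length, fun k hk => hk.1⟩
  have hne : ({k | tailAgrees b w k}).Nonempty := ⟨0, by simp [tailAgrees], fun i hi => by omega⟩
  have hKmem : tailAgrees b w K := by
    have h := Nat.sSup_mem hne hbdd
    rwa [show sSup {k | tailAgrees b w k} = K from hk2] at h
  obtain ⟨hKlen, hKb⟩ := hKmem
  have hset : {k | tailAgrees (Om α β 0) w k} = {k | tailAgrees (Om α β 0) (pre b K) k} := by
    ext k
    constructor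
    · rintro ⟨hk, ha⟩
      have hkK : k ≤ K := by
        by_contra h
        push_neg at h
        have hD : K ∈ D (Om α β 0) b := by
          refine ⟨k - K, fun i hi => ?_⟩
          have h1 := hKb i hi
          have h2 := ha (k - K + i) (by omega)
          rw [show w.length - k + (k - K + i) = w.length - K + i by omega] at h2
          rw [← h1, h2]
        exact absurd (hL K hD) (by omega)
      refine ⟨by rw [pre_length]; exact hkK, fun i hi => ?_⟩
      rw [pre_length, pre_getD b (by omega : K - k + i < K)]
      have h1 := hKb (K - k + i) (by omega)
      have h2 := ha i hi
      rw [show w.length - K + (K - k + i) = w.length - k + i by omega] at h1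
      rw [← h1, h2]
    · rintro ⟨hk, ha⟩
      rw [pre_length] at hk ha
      refine ⟨le_trans hk hKlen, fun i hi => ?_⟩
      have h1 := hKb (K - k + i) (by omega)
      have h2 := ha i hi
      rw [pre_getD b (by omega : K - k + i < K)] at h2
      rw [show w.length - K + (K - k + i) = w.length - k + i by omega] at h1
      rw [h1, h2]
  unfold kmax
  rw [hset]

end IntermediateBeta
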